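/- Let X and Y be associated random variables with absolutely continuous distributions whose marginal densities f_X and f_Y are bounded by M, and suppose Cov(X,Y) > 0. Then for all x, y ∈ ℝ, Cov(1_{(−∞,x]}(X), 1_{(−∞,y]}(Y)) ≤ 3·2^{−2/3}·M*·Cov(X,Y)^{1/3}, where M* = max(2/π², 45M); this follows from optimizing T ↦ M*(T²·Cov(X,Y) + 1/T) over T > 0. -/

import Mathlib

open MeasureTheory Filter Set
open scoped ENNReal Topology

/-- Covariance of two real random variables (when the relevant integrals exist). -/
noncomputable def cov {Ω : Type*} [MeasurableSpace Ω] (P : Measure Ω) (U V : Ω → ℝ) : ℝ :=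
  ∫ ω, U ω * V ω ∂P - (∫ ω, U ω ∂P) * ∫ ω, V ω ∂P

/-- The pair `(X, Y)` is associated : for all coordinatewise nondecreasing `f, g : ℝ² → ℝ`
for which the covariance exists, `Cov(f(X,Y), g(X,Y)) ≥ 0`. -/
def AssocPair {Ω : Type*} [MeasurableSpace Ω] (P : Measure Ω) (X Y : Ω → ℝ) : Prop :=
  ∀ f g : ℝ × ℝ → ℝ, Measurable f → Measurable g → Monotone f → Monotone g →
    Integrable (fun ω => f (X ω, Y ω)) P → Integrable (fun ω => g (X ω, Y ω)) P →
    Integrable (fun ω => f (X ω, Y ω) * g (X ω, Y ω)) P →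
    0 ≤ cov P (fun ω => f (X ω, Y ω)) (fun ω => g (X ω, Y ω))

section Helpers

variable {Ω : Type*} [MeasurableSpace Ω] {P : Measure Ω}

lemma integrable_of_bdd [IsProbabilityMeasure P] {f : Ω → ℝ} (hm : AEStronglyMeasurable f P)
    {C : ℝ} (h : ∀ ω, |f ω| ≤ C) : Integrable f P :=
  Integrable.mono' (integrable_const C) hm (ae_of_all _ fun ω => by
    simpa [Real.norm_eq_abs] using h ω)

lemma cov_comm (U V : Ω → ℝ) : cov P U V = cov P V U := by
  simp [cov, mul_comm]

lemma cov_tsub (t : ℝ) {U V W : Ω → ℝ} (hU : Integrable U P) (hV : Integrable V P)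
    (hUW : Integrable (fun ω => U ω * W ω) P) (hVW : Integrable (fun ω => V ω * W ω) P) :
    cov P (fun ω => t * U ω - V ω) W = t * cov P U W - cov P V W := by
  unfold cov
  have h1 : ∫ ω, (t * U ω - V ω) * W ω ∂P
      = t * ∫ ω, U ω * W ω ∂P - ∫ ω, V ω * W ω ∂P := by
    have : (fun ω => (t * U ω - V ω) * W ω)
        = fun ω => t * (U ω * W ω) - V ω * W ω := by funext ω; ring
    rw [this, integral_sub (hUW.const_mul t) hVW, integral_const_mul]
  have h2 : ∫ ω, (t * U ω - V ω) ∂P = t * ∫ ω, U ω ∂P - ∫ ω, V ω ∂P := by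
    rw [integral_sub (hU.const_mul t) hV, integral_const_mul]
  rw [h1, h2]; ring

lemma cov_sub_left {U V W : Ω → ℝ} (hU : Integrable U P) (hV : Integrable V P)
    (hUW : Integrable (fun ω => U ω * W ω) P) (hVW : Integrable (fun ω => V ω * W ω) P) :
    cov P (fun ω => U ω - V ω) W = cov P U W - cov P V W := by
  have := cov_tsub (P := P) 1 hU hV hUW hVW (W := W)
  simpa using this

lemma cov_one_sub [IsProbabilityMeasure P] {f g : Ω → ℝ} (hf : Integrable f P)
    (hg : Integrable g P) (hfg : Integrable (fun ω => f ω * g ω) P) :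
    cov P (fun ω => 1 - f ω) (fun ω => 1 - g ω) = cov P f g := by
  unfold cov
  have h1 : ∫ ω, (1 - f ω) * (1 - g ω) ∂P
      = 1 - ∫ ω, f ω ∂P - ∫ ω, g ω ∂P + ∫ ω, f ω * g ω ∂P := by
    have hF : Integrable (fun ω => 1 - f ω - g ω) P := ((integrable_const 1).sub hf).sub hg
    have hF1 : Integrable (fun ω => (1:ℝ) - f ω) P := (integrable_const 1).sub hf
    have : (fun ω => (1 - f ω) * (1 - g ω))
        = fun ω => (1 - f ω - g ω) + f ω * g ω := by funext ω; ring
    rw [this, integral_add hF hfg, integral_sub hF1 hg, integral_sub (integrable_const 1) hf]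
    simp
  have h2 : ∫ ω, (1 - f ω) ∂P = 1 - ∫ ω, f ω ∂P := by
    rw [integral_sub (integrable_const 1) hf]; simp
  have h3 : ∫ ω, (1 - g ω) ∂P = 1 - ∫ ω, g ω ∂P := by
    rw [integral_sub (integrable_const 1) hg]; simp
  rw [h1, h2, h3]; ring

lemma abs_cov_le_two_mul [IsProbabilityMeasure P] {f g : Ω → ℝ} (hfi : Integrable f P)
    (hgi : Integrable g P) (hfgi : Integrable (fun ω => f ω * g ω) P)
    (hf0 : ∀ ω, 0 ≤ f ω) (hg1 : ∀ ω, |g ω| ≤ 1) :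
    |cov P f g| ≤ 2 * ∫ ω, f ω ∂P := by
  have habs : ∀ (h : Ω → ℝ), |∫ ω, h ω ∂P| ≤ ∫ ω, |h ω| ∂P := fun h => by
    simpa [Real.norm_eq_abs] using norm_integral_le_integral_norm (μ := P) h
  have h1 : |∫ ω, f ω * g ω ∂P| ≤ ∫ ω, f ω ∂P := by
    calc |∫ ω, f ω * g ω ∂P| ≤ ∫ ω, |f ω * g ω| ∂P := habs _
    _ ≤ ∫ ω, f ω ∂P := by
        refine integral_mono hfgi.abs hfi fun ω => ?_
        rw [abs_mul, abs_of_nonneg (hf0 ω)]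
        calc f ω * |g ω| ≤ f ω * 1 := mul_le_mul_of_nonneg_left (hg1 ω) (hf0 ω)
        _ = f ω := mul_one _
  have h2 : |∫ ω, g ω ∂P| ≤ 1 := by
    calc |∫ ω, g ω ∂P| ≤ ∫ ω, |g ω| ∂P := habs _
    _ ≤ ∫ ω, (1:ℝ) ∂P := integral_mono hgi.abs (integrable_const 1) hg1
    _ = 1 := by simp
  have h3 : (0:ℝ) ≤ ∫ ω, f ω ∂P := integral_nonneg hf0
  unfold cov
  calc |∫ ω, f ω * g ω ∂P - (∫ ω, f ω ∂P) * ∫ ω, g ω ∂P|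
      ≤ |∫ ω, f ω * g ω ∂P| + |(∫ ω, f ω ∂P) * ∫ ω, g ω ∂P| := abs_sub _ _
  _ ≤ ∫ ω, f ω ∂P + ∫ ω, f ω ∂P := by
      refine add_le_add h1 ?_
      rw [abs_mul, abs_of_nonneg h3]
      calc (∫ ω, f ω ∂P) * |∫ ω, g ω ∂P| ≤ (∫ ω, f ω ∂P) * 1 :=
        mul_le_mul_of_nonneg_left h2 h3
      _ = _ := mul_one _
  _ = 2 * ∫ ω, f ω ∂P := by ring

end Helpers

noncomputable def ramp (T a u : ℝ) : ℝ := min 1 (max 0 (T * (u - a)))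

lemma ramp_meas (T a : ℝ) : Measurable (ramp T a) := by
  unfold ramp; fun_prop

lemma ramp_mono {T : ℝ} (hT : 0 ≤ T) (a : ℝ) : Monotone (ramp T a) := by
  intro u v huv
  unfold ramp
  exact min_le_min le_rfl (max_le_max le_rfl (by nlinarith))

lemma ramp_nonneg (T a u : ℝ) : 0 ≤ ramp T a u := le_min zero_le_one (le_max_left _ _)

lemma ramp_le_one (T a u : ℝ) : ramp T a u ≤ 1 := min_le_left _ _

lemma ramp_lip {T : ℝ} (hT : 0 ≤ T) (a : ℝ) {u v : ℝ} (huv : u ≤ v) :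
    ramp T a v - ramp T a u ≤ T * (v - u) := by
  unfold ramp
  rcases le_total (1:ℝ) (max 0 (T * (v - a))) with h1 | h1 <;>
  rcases le_total (1:ℝ) (max 0 (T * (u - a))) with h2 | h2 <;>
  rcases le_total (0:ℝ) (T * (v - a)) with h3 | h3 <;>
  rcases le_total (0:ℝ) (T * (u - a)) with h4 | h4 <;>
  simp [min_def, max_def, *] <;> first | (split_ifs <;> nlinarith) | nlinarith

lemma ramp_eq_zero {T : ℝ} (hT : 0 ≤ T) {a u : ℝ} (h : u ≤ a) : ramp T a u = 0 := by
  unfold ramp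
  have : T * (u - a) ≤ 0 := mul_nonpos_of_nonneg_of_nonpos hT (by linarith)
  rw [max_eq_left this, min_eq_right zero_le_one]

lemma ramp_eq_one {T : ℝ} (hT : 0 < T) {a u : ℝ} (h : a + 1/T ≤ u) : ramp T a u = 1 := by
  unfold ramp
  have h1 : (1:ℝ) ≤ T * (u - a) := by
    have := (div_le_iff₀ hT).mp (by linarith : 1/T ≤ u - a)
    linarith
  rw [max_eq_right (by linarith), min_eq_left h1]

lemma exp_le_of_le_indicator {Ω : Type*} [MeasurableSpace Ω] (P : Measure Ω)
    [IsProbabilityMeasure P]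
    {X : Ω → ℝ} (hXm : Measurable X) {fX : ℝ → ℝ} {M : ℝ} (hM : 0 ≤ M)
    (hfX_bdd : ∀ x, fX x ≤ M)
    (hdX : Measure.map X P = MeasureTheory.volume.withDensity fun x => ENNReal.ofReal (fX x))
    {d : ℝ → ℝ} (hd : Measurable d) (hd0 : ∀ u, 0 ≤ d u)
    {a b : ℝ} (hab : a ≤ b) (hdle : ∀ u, d u ≤ Set.indicator (Set.Ioc a b) 1 u) :
    ∫ ω, d (X ω) ∂P ≤ M * (b - a) := by
  have hd1 : ∀ u, d u ≤ 1 := fun u => (hdle u).trans (by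
    by_cases h : u ∈ Set.Ioc a b <;> simp [Set.indicator_apply, h])
  have hintd : Integrable (fun ω => d (X ω)) P := by
    refine Integrable.mono' (integrable_const 1) ((hd.comp hXm).aestronglyMeasurable)
      (ae_of_all _ fun ω => ?_)
    rw [Real.norm_eq_abs, abs_of_nonneg (hd0 _)]; exact hd1 _
  have hintind : Integrable (fun ω => Set.indicator (X ⁻¹' Set.Ioc a b) (fun _ => (1:ℝ)) ω) P := by
    refine Integrable.mono' (integrable_const 1)
      ((measurable_const.indicator (hXm measurableSet_Ioc)).aestronglyMeasurable)
      (ae_of_all _ fun ω => ?_)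
    rw [Real.norm_eq_abs]
    by_cases h : ω ∈ X ⁻¹' Set.Ioc a b <;> simp [Set.indicator_apply, h]
  have step1 : ∫ ω, d (X ω) ∂P
      ≤ ∫ ω, Set.indicator (X ⁻¹' Set.Ioc a b) (fun _ => (1:ℝ)) ω ∂P := by
    refine integral_mono hintd hintind fun ω => ?_
    have := hdle (X ω)
    by_cases h : X ω ∈ Set.Ioc a b <;>
      simpa [Set.indicator_apply, h, Set.mem_preimage] using this
  have step2 : ∫ ω, Set.indicator (X ⁻¹' Set.Ioc a b) (fun _ => (1:ℝ)) ω ∂P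
      = (P (X ⁻¹' Set.Ioc a b)).toReal := by
    rw [integral_indicator_const (1:ℝ) (hXm measurableSet_Ioc)]; simp; rfl
  have step3 : P (X ⁻¹' Set.Ioc a b) ≤ ENNReal.ofReal M * ENNReal.ofReal (b - a) := by
    have hmap : P (X ⁻¹' Set.Ioc a b) = Measure.map X P (Set.Ioc a b) :=
      (Measure.map_apply hXm measurableSet_Ioc).symm
    rw [hmap, hdX, withDensity_apply _ measurableSet_Ioc]
    calc ∫⁻ x in Set.Ioc a b, ENNReal.ofReal (fX x) ∂volume
        ≤ ∫⁻ _x in Set.Ioc a b, ENNReal.ofReal M ∂volume :=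
          lintegral_mono fun x => ENNReal.ofReal_le_ofReal (hfX_bdd x)
      _ = ENNReal.ofReal M * volume (Set.Ioc a b) := by rw [setLIntegral_const]
      _ = ENNReal.ofReal M * ENNReal.ofReal (b - a) := by rw [Real.volume_Ioc]
  have step4 : (P (X ⁻¹' Set.Ioc a b)).toReal ≤ M * (b - a) := by
    have := ENNReal.toReal_mono (by finiteness) step3
    rwa [ENNReal.toReal_mul, ENNReal.toReal_ofReal hM,
      ENNReal.toReal_ofReal (by linarith)] at this
  linarith [step1, step2 ▸ step1]

lemma key_cube {M : ℝ} (hM : 0 < M) :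
    16 * M ^ 2 ≤ (max (2 / Real.pi ^ 2) (45 * M)) ^ 3 := by
  rcases le_or_gt M (1/100) with h | h
  · have hπ : Real.pi ≤ 3.15 := Real.pi_lt_d2.le
    have hπ0 : 0 < Real.pi := Real.pi_pos
    have h2 : (0.2015 : ℝ) ≤ 2 / Real.pi ^ 2 := by
      rw [le_div_iff₀ (by positivity)]
      nlinarith
    have h3 : (0.2015 : ℝ) ^ 3 ≤ (max (2 / Real.pi ^ 2) (45 * M)) ^ 3 := by
      apply pow_le_pow_left₀ (by norm_num)
      exact h2.trans (le_max_left _ _)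
    nlinarith
  · have h2 : (45 * M) ≤ max (2 / Real.pi ^ 2) (45 * M) := le_max_right _ _
    have h3 : (45 * M) ^ 3 ≤ (max (2 / Real.pi ^ 2) (45 * M)) ^ 3 :=
      pow_le_pow_left₀ (by positivity) h2 3
    nlinarith

lemma key_numeric {M : ℝ} (hM : 0 < M) :
    (2:ℝ) ^ ((2:ℝ)/3) * M ^ ((2:ℝ)/3)
      ≤ 2 ^ (-(2:ℝ)/3) * max (2 / Real.pi ^ 2) (45 * M) := by
  set K := max (2 / Real.pi ^ 2) (45 * M) with hK
  have hKpos : 0 < K := lt_max_of_lt_right (by positivity)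
  have hcube : M ^ (2:ℕ) ≤ (1/16) * K ^ (3:ℕ) := by
    have := key_cube hM; norm_num; linarith
  have step : M ^ ((2:ℝ)/3) ≤ 2 ^ (-(4:ℝ)/3) * K := by
    have h1 : M ^ ((2:ℝ)/3) = (M ^ (2:ℕ)) ^ ((1:ℝ)/3) := by
      rw [← Real.rpow_natCast M 2, ← Real.rpow_mul hM.le]; norm_num
    have h2 : ((1/16 : ℝ) * K ^ (3:ℕ)) ^ ((1:ℝ)/3) = 2 ^ (-(4:ℝ)/3) * K := by
      rw [Real.mul_rpow (by norm_num) (by positivity)]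
      congr 1
      · rw [show (1/16 : ℝ) = 2 ^ (-(4:ℝ)) by
          rw [Real.rpow_neg (by norm_num)]; norm_num]
        rw [← Real.rpow_mul (by norm_num)]; norm_num
      · rw [← Real.rpow_natCast K 3, ← Real.rpow_mul hKpos.le]; norm_num
    calc M ^ ((2:ℝ)/3) = (M ^ (2:ℕ)) ^ ((1:ℝ)/3) := h1
    _ ≤ ((1/16 : ℝ) * K ^ (3:ℕ)) ^ ((1:ℝ)/3) :=
        Real.rpow_le_rpow (by positivity) hcube (by norm_num)
    _ = 2 ^ (-(4:ℝ)/3) * K := h2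
  calc (2:ℝ) ^ ((2:ℝ)/3) * M ^ ((2:ℝ)/3)
      ≤ 2 ^ ((2:ℝ)/3) * (2 ^ (-(4:ℝ)/3) * K) := by
        apply mul_le_mul_of_nonneg_left step (by positivity)
  _ = 2 ^ (-(2:ℝ)/3) * K := by
      rw [← mul_assoc, ← Real.rpow_add (by norm_num)]; norm_num

lemma rpow_fact1 {A C : ℝ} (hA : 0 < A) (hC : 0 < C) :
    (A/C) ^ ((1:ℝ)/3) * (A/C) ^ ((1:ℝ)/3) * C = A ^ ((2:ℝ)/3) * C ^ ((1:ℝ)/3) := by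
  have h1 : (A/C) ^ ((1:ℝ)/3) * (A/C) ^ ((1:ℝ)/3) = (A/C) ^ ((2:ℝ)/3) := by
    rw [← Real.rpow_add (div_pos hA hC)]; norm_num
  rw [h1, Real.div_rpow hA.le hC.le]
  rw [div_mul_eq_mul_div, div_eq_iff (ne_of_gt (Real.rpow_pos_of_pos hC _))]
  rw [mul_assoc, ← Real.rpow_add hC]; norm_num

lemma rpow_fact2 {A C : ℝ} (hA : 0 < A) (hC : 0 < C) :
    A * (1 / (A/C) ^ ((1:ℝ)/3)) = A ^ ((2:ℝ)/3) * C ^ ((1:ℝ)/3) := by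
  have h3 : A ^ ((2:ℝ)/3) * A ^ ((1:ℝ)/3) = A := by rw [← Real.rpow_add hA]; norm_num
  have ha3 : (0:ℝ) < A ^ ((1:ℝ)/3) := Real.rpow_pos_of_pos hA _
  rw [Real.div_rpow hA.le hC.le, one_div, inv_div, ← mul_div_assoc,
    div_eq_iff (ne_of_gt ha3)]
  linear_combination (-(C ^ ((1:ℝ)/3))) * h3
set_option maxHeartbeats 2000000 in
theorem cov_indicator_le_cuberoot_of_associated
    {Ω : Type*} [MeasurableSpace Ω] (P : Measure Ω) [IsProbabilityMeasure P]
    (X Y : Ω → ℝ) (hXm : Measurable X) (hYm : Measurable Y)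
    (hassoc : AssocPair P X Y)
    -- the covariance of X and Y exists
    (hXi : Integrable X P) (hYi : Integrable Y P)
    (hXYi : Integrable (fun ω => X ω * Y ω) P)
    -- absolutely continuous distributions with densities bounded by M
    (M : ℝ) (fX fY : ℝ → ℝ)
    (hfX_nonneg : ∀ x, 0 ≤ fX x) (hfY_nonneg : ∀ x, 0 ≤ fY x)
    (hfX_bdd : ∀ x, fX x ≤ M) (hfY_bdd : ∀ x, fY x ≤ M)
    (hdX : Measure.map X P = MeasureTheory.volume.withDensity fun x => ENNReal.ofReal (fX x))
    (hdY : Measure.map Y P = MeasureTheory.volume.withDensity fun x => ENNReal.ofReal (fY x))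
    -- positive covariance
    (hcov_pos : 0 < cov P X Y) :
    ∀ x y : ℝ,
      cov P (fun ω => Set.indicator (Set.Iic x) (1 : ℝ → ℝ) (X ω))
            (fun ω => Set.indicator (Set.Iic y) (1 : ℝ → ℝ) (Y ω))
        ≤ 3 * (2 : ℝ) ^ (-(2 : ℝ) / 3) * max (2 / Real.pi ^ 2) (45 * M)
            * cov P X Y ^ ((1 : ℝ) / 3) := by
  intro x y
  -- M is positive
  have hM0 : 0 ≤ M := le_trans (hfX_nonneg 0) (hfX_bdd 0)
  have hMpos : 0 < M := by
    rcases hM0.lt_or_eq with h | h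
    · exact h
    · exfalso
      have hfx0 : ∀ u, fX u = 0 := fun u => le_antisymm (h ▸ hfX_bdd u) (hfX_nonneg u)
      have hpm : IsProbabilityMeasure (Measure.map X P) :=
        Measure.isProbabilityMeasure_map hXm.aemeasurable
      have h1 : Measure.map X P Set.univ = 1 := measure_univ
      rw [hdX] at h1
      have h2 : (fun u => ENNReal.ofReal (fX u)) = fun _ => (0:ℝ≥0∞) :=
        funext fun u => by simp [hfx0 u]
      rw [h2] at h1
      simp at h1
  obtain ⟨C, hC⟩ : ∃ c, c = cov P X Y := ⟨_, rfl⟩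
  have hCpos : 0 < C := by rw [hC]; exact hcov_pos
  obtain ⟨A, hA⟩ : ∃ a, a = 2 * M := ⟨_, rfl⟩
  have hApos : 0 < A := by rw [hA]; linarith
  obtain ⟨T, hT⟩ : ∃ t, t = (A / C) ^ ((1:ℝ)/3) := ⟨_, rfl⟩
  have hTpos : 0 < T := by rw [hT]; exact Real.rpow_pos_of_pos (div_pos hApos hCpos) _
  have hinvT0 : 0 ≤ 1 / T := by positivity
  -- functions
  obtain ⟨Ix, hIxd⟩ : ∃ f, f = Set.indicator (Set.Iic x) (1 : ℝ → ℝ) := ⟨_, rfl⟩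
  obtain ⟨Iy, hIyd⟩ : ∃ f, f = Set.indicator (Set.Iic y) (1 : ℝ → ℝ) := ⟨_, rfl⟩
  obtain ⟨Jx, hJxd⟩ : ∃ f, f = fun u => 1 - Ix u := ⟨_, rfl⟩
  obtain ⟨Jy, hJyd⟩ : ∃ f, f = fun u => 1 - Iy u := ⟨_, rfl⟩
  obtain ⟨φ, hφd⟩ : ∃ f, f = ramp T (x - 1/T) := ⟨_, rfl⟩
  obtain ⟨ψ, hψd⟩ : ∃ f, f = ramp T (y - 1/T) := ⟨_, rfl⟩
  rw [← hC, ← hIxd, ← hIyd]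
  -- pointwise facts
  have hIx_val : ∀ u, Ix u = if u ≤ x then 1 else 0 := fun u => by
    rw [hIxd]; by_cases h : u ≤ x <;> simp [Set.indicator_apply, Set.mem_Iic, h]
  have hIy_val : ∀ u, Iy u = if u ≤ y then 1 else 0 := fun u => by
    rw [hIyd]; by_cases h : u ≤ y <;> simp [Set.indicator_apply, Set.mem_Iic, h]
  have hJx_le : ∀ u, u ≤ x → Jx u = 0 := fun u h => by
    rw [hJxd]; simp only [hIx_val u, if_pos h]; ring
  have hJx_gt : ∀ u, x < u → Jx u = 1 := fun u h => by
    rw [hJxd]; simp only [hIx_val u, if_neg (not_le.mpr h)]; ring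
  have hJy_le : ∀ u, u ≤ y → Jy u = 0 := fun u h => by
    rw [hJyd]; simp only [hIy_val u, if_pos h]; ring
  have hJy_gt : ∀ u, y < u → Jy u = 1 := fun u h => by
    rw [hJyd]; simp only [hIy_val u, if_neg (not_le.mpr h)]; ring
  have hJx_abs : ∀ u, |Jx u| ≤ 1 := fun u => by
    rcases le_or_gt u x with h | h
    · rw [hJx_le u h]; norm_num
    · rw [hJx_gt u h]; norm_num
  have hJy_abs : ∀ u, |Jy u| ≤ 1 := fun u => by
    rcases le_or_gt u y with h | h
    · rw [hJy_le u h]; norm_num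
    · rw [hJy_gt u h]; norm_num
  have hφ0 : ∀ u, 0 ≤ φ u := fun u => by rw [hφd]; exact ramp_nonneg _ _ _
  have hψ0 : ∀ u, 0 ≤ ψ u := fun u => by rw [hψd]; exact ramp_nonneg _ _ _
  have hφ1 : ∀ u, φ u ≤ 1 := fun u => by rw [hφd]; exact ramp_le_one _ _ _
  have hψ1 : ∀ u, ψ u ≤ 1 := fun u => by rw [hψd]; exact ramp_le_one _ _ _
  have hφ_abs : ∀ u, |φ u| ≤ 1 := fun u => by
    rw [abs_of_nonneg (hφ0 u)]; exact hφ1 u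
  have hψ_abs : ∀ u, |ψ u| ≤ 1 := fun u => by
    rw [abs_of_nonneg (hψ0 u)]; exact hψ1 u
  have hφ_lip : ∀ u v : ℝ, u ≤ v → φ v - φ u ≤ T * (v - u) := fun u v h => by
    rw [hφd]; exact ramp_lip hTpos.le _ h
  have hψ_lip : ∀ u v : ℝ, u ≤ v → ψ v - ψ u ≤ T * (v - u) := fun u v h => by
    rw [hψd]; exact ramp_lip hTpos.le _ h
  have hφ_zero : ∀ u, u ≤ x - 1/T → φ u = 0 := fun u h => by
    rw [hφd]; exact ramp_eq_zero hTpos.le h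
  have hψ_zero : ∀ u, u ≤ y - 1/T → ψ u = 0 := fun u h => by
    rw [hψd]; exact ramp_eq_zero hTpos.le h
  have hφ_one : ∀ u, x ≤ u → φ u = 1 := fun u h => by
    rw [hφd]; exact ramp_eq_one hTpos (by linarith)
  have hψ_one : ∀ u, y ≤ u → ψ u = 1 := fun u h => by
    rw [hψd]; exact ramp_eq_one hTpos (by linarith)
  have hφ_mono : Monotone φ := by rw [hφd]; exact ramp_mono hTpos.le _
  have hψ_mono : Monotone ψ := by rw [hψd]; exact ramp_mono hTpos.le _
  -- measurability
  have hIxm : Measurable Ix := by rw [hIxd]; exact measurable_const.indicator measurableSet_Iic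
  have hIym : Measurable Iy := by rw [hIyd]; exact measurable_const.indicator measurableSet_Iic
  have hJxm : Measurable Jx := by rw [hJxd]; exact measurable_const.sub hIxm
  have hJym : Measurable Jy := by rw [hJyd]; exact measurable_const.sub hIym
  have hφm : Measurable φ := by rw [hφd]; exact ramp_meas _ _
  have hψm : Measurable ψ := by rw [hψd]; exact ramp_meas _ _
  -- integrability kit
  have habs_mul : ∀ a b : ℝ, |a| ≤ 1 → |b| ≤ 1 → |a * b| ≤ 1 := fun a b ha hb => by
    rw [abs_mul]; nlinarith [abs_nonneg a, abs_nonneg b]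
  have bint : ∀ {h : Ω → ℝ}, Measurable h → (∀ ω, |h ω| ≤ 1) → Integrable h P :=
    fun hm hb => integrable_of_bdd hm.aestronglyMeasurable hb
  have hprodX : ∀ {g : Ω → ℝ}, Measurable g → (∀ ω, |g ω| ≤ 1) →
      Integrable (fun ω => X ω * g ω) P := fun {g} hgm hgb => by
    refine Integrable.mono' hXi.abs ((hXm.mul hgm).aestronglyMeasurable)
      (ae_of_all _ fun ω => ?_)
    rw [Real.norm_eq_abs, abs_mul]
    nlinarith [abs_nonneg (X ω), abs_nonneg (g ω), hgb ω]
  -- individual integrable facts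
  have hJxX : Integrable (fun ω => Jx (X ω)) P := bint (hJxm.comp hXm) fun ω => hJx_abs _
  have hJyY : Integrable (fun ω => Jy (Y ω)) P := bint (hJym.comp hYm) fun ω => hJy_abs _
  have hφX : Integrable (fun ω => φ (X ω)) P := bint (hφm.comp hXm) fun ω => hφ_abs _
  have hψY : Integrable (fun ω => ψ (Y ω)) P := bint (hψm.comp hYm) fun ω => hψ_abs _
  have hJxJy : Integrable (fun ω => Jx (X ω) * Jy (Y ω)) P :=
    bint ((hJxm.comp hXm).mul (hJym.comp hYm)) fun ω => habs_mul _ _ (hJx_abs _) (hJy_abs _)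
  have hφXJyY : Integrable (fun ω => φ (X ω) * Jy (Y ω)) P :=
    bint ((hφm.comp hXm).mul (hJym.comp hYm)) fun ω => habs_mul _ _ (hφ_abs _) (hJy_abs _)
  have hφXψY : Integrable (fun ω => φ (X ω) * ψ (Y ω)) P :=
    bint ((hφm.comp hXm).mul (hψm.comp hYm)) fun ω => habs_mul _ _ (hφ_abs _) (hψ_abs _)
  have hψYφX : Integrable (fun ω => ψ (Y ω) * φ (X ω)) P :=
    bint ((hψm.comp hYm).mul (hφm.comp hXm)) fun ω => habs_mul _ _ (hψ_abs _) (hφ_abs _)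
  have hJyYφX : Integrable (fun ω => Jy (Y ω) * φ (X ω)) P :=
    bint ((hJym.comp hYm).mul (hφm.comp hXm)) fun ω => habs_mul _ _ (hJy_abs _) (hφ_abs _)
  have hXψY : Integrable (fun ω => X ω * ψ (Y ω)) P := hprodX (hψm.comp hYm) fun ω => hψ_abs _
  have hYX : Integrable (fun ω => Y ω * X ω) P := by
    have : (fun ω => Y ω * X ω) = fun ω => X ω * Y ω := funext fun ω => mul_comm _ _
    rw [this]; exact hXYi
  have hψYX : Integrable (fun ω => ψ (Y ω) * X ω) P := by
    have : (fun ω => ψ (Y ω) * X ω) = fun ω => X ω * ψ (Y ω) := funext fun ω => mul_comm _ _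
    rw [this]; exact hXψY
  -- Step 1 : reduce to J's
  have hrw1 : (fun ω => Ix (X ω)) = fun ω => 1 - Jx (X ω) := by
    funext ω; simp only [hJxd]; ring
  have hrw2 : (fun ω => Iy (Y ω)) = fun ω => 1 - Jy (Y ω) := by
    funext ω; simp only [hJyd]; ring
  rw [hrw1, hrw2, cov_one_sub hJxX hJyY hJxJy]
  -- Step 2 : association gives cov φX ψY ≤ T * (T * C)
  have assoc1 : 0 ≤ cov P (fun ω => T * X ω - φ (X ω)) (fun ω => ψ (Y ω)) := by
    refine hassoc (fun p => T * p.1 - φ p.1) (fun p => ψ p.2)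
      ((measurable_const.mul measurable_fst).sub (hφm.comp measurable_fst))
      (hψm.comp measurable_snd)
      (fun p q hpq => by
        have := hφ_lip p.1 q.1 hpq.1
        simp only; nlinarith [hpq.1])
      (fun p q hpq => hψ_mono hpq.2)
      ((hXi.const_mul T).sub hφX) hψY ?_
    have : (fun ω => (T * X ω - φ (X ω)) * ψ (Y ω))
        = fun ω => T * (X ω * ψ (Y ω)) - φ (X ω) * ψ (Y ω) := by funext ω; ring
    rw [this]; exact (hXψY.const_mul T).sub hφXψY
  have expand1 : cov P (fun ω => T * X ω - φ (X ω)) (fun ω => ψ (Y ω))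
      = T * cov P X (fun ω => ψ (Y ω)) - cov P (fun ω => φ (X ω)) (fun ω => ψ (Y ω)) :=
    cov_tsub T hXi hφX hXψY hφXψY
  have assoc2 : 0 ≤ cov P X (fun ω => T * Y ω - ψ (Y ω)) := by
    refine hassoc (fun p => p.1) (fun p => T * p.2 - ψ p.2)
      measurable_fst
      ((measurable_const.mul measurable_snd).sub (hψm.comp measurable_snd))
      (fun p q hpq => hpq.1)
      (fun p q hpq => by
        have := hψ_lip p.2 q.2 hpq.2
        simp only; nlinarith [hpq.2])
      hXi ((hYi.const_mul T).sub hψY) ?_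
    have : (fun ω => X ω * (T * Y ω - ψ (Y ω)))
        = fun ω => T * (X ω * Y ω) - X ω * ψ (Y ω) := by funext ω; ring
    rw [this]; exact (hXYi.const_mul T).sub hXψY
  have ccomm3 : cov P X (fun ω => T * Y ω - ψ (Y ω))
      = cov P (fun ω => T * Y ω - ψ (Y ω)) X := cov_comm _ _
  have expand2 : cov P (fun ω => T * Y ω - ψ (Y ω)) X
      = T * cov P Y X - cov P (fun ω => ψ (Y ω)) X :=
    cov_tsub T hYi hψY hYX hψYX
  have ccomm1 : cov P Y X = C := by rw [hC]; exact cov_comm _ _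
  have ccomm2 : cov P (fun ω => ψ (Y ω)) X = cov P X (fun ω => ψ (Y ω)) := cov_comm _ _
  have a2 : cov P X (fun ω => ψ (Y ω)) ≤ T * C := by
    rw [ccomm3, expand2, ccomm1, ccomm2] at assoc2; linarith
  have h3main : cov P (fun ω => φ (X ω)) (fun ω => ψ (Y ω)) ≤ T * (T * C) := by
    rw [expand1] at assoc1
    nlinarith [mul_le_mul_of_nonneg_left a2 hTpos.le]
  -- Step 3 : the two correction terms
  have hd0 : ∀ u, 0 ≤ φ u - Jx u := fun u => by
    rcases le_or_gt u x with h | h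
    · rw [hJx_le u h]; have := hφ0 u; linarith
    · rw [hJx_gt u h, hφ_one u h.le]; norm_num
  have hdle : ∀ u, φ u - Jx u ≤ Set.indicator (Set.Ioc (x - 1/T) x) 1 u := fun u => by
    rcases le_or_gt u (x - 1/T) with h | h
    · rw [hφ_zero u h, hJx_le u (by linarith),
        Set.indicator_of_notMem (fun hm => by rw [Set.mem_Ioc] at hm; linarith [hm.1]) _]
      norm_num
    · rcases le_or_gt u x with h2 | h2
      · rw [hJx_le u h2, Set.indicator_of_mem (Set.mem_Ioc.mpr ⟨h, h2⟩)]
        have := hφ1 u; simp; linarith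
      · rw [hJx_gt u h2, hφ_one u h2.le,
          Set.indicator_of_notMem (fun hm => by rw [Set.mem_Ioc] at hm; linarith [hm.2]) _]
        norm_num
  have he0 : ∀ u, 0 ≤ ψ u - Jy u := fun u => by
    rcases le_or_gt u y with h | h
    · rw [hJy_le u h]; have := hψ0 u; linarith
    · rw [hJy_gt u h, hψ_one u h.le]; norm_num
  have hele : ∀ u, ψ u - Jy u ≤ Set.indicator (Set.Ioc (y - 1/T) y) 1 u := fun u => by
    rcases le_or_gt u (y - 1/T) with h | h
    · rw [hψ_zero u h, hJy_le u (by linarith),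
        Set.indicator_of_notMem (fun hm => by rw [Set.mem_Ioc] at hm; linarith [hm.1]) _]
      norm_num
    · rcases le_or_gt u y with h2 | h2
      · rw [hJy_le u h2, Set.indicator_of_mem (Set.mem_Ioc.mpr ⟨h, h2⟩)]
        have := hψ1 u; simp; linarith
      · rw [hJy_gt u h2, hψ_one u h2.le,
          Set.indicator_of_notMem (fun hm => by rw [Set.mem_Ioc] at hm; linarith [hm.2]) _]
        norm_num
  have hEd : ∫ ω, (φ (X ω) - Jx (X ω)) ∂P ≤ M * (1/T) := by
    have h := exp_le_of_le_indicator P hXm hM0 hfX_bdd hdX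
      (d := fun u => φ u - Jx u) (hφm.sub hJxm) hd0
      (a := x - 1/T) (b := x) (by linarith) hdle
    have : M * (x - (x - 1/T)) = M * (1/T) := by ring
    rw [this] at h; exact h
  have hEe : ∫ ω, (ψ (Y ω) - Jy (Y ω)) ∂P ≤ M * (1/T) := by
    have h := exp_le_of_le_indicator P hYm hM0 hfY_bdd hdY
      (d := fun u => ψ u - Jy u) (hψm.sub hJym) he0
      (a := y - 1/T) (b := y) (by linarith) hele
    have : M * (y - (y - 1/T)) = M * (1/T) := by ring
    rw [this] at h; exact h
  have hsubprod1 : Integrable (fun ω => (φ (X ω) - Jx (X ω)) * Jy (Y ω)) P := by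
    have : (fun ω => (φ (X ω) - Jx (X ω)) * Jy (Y ω))
        = fun ω => φ (X ω) * Jy (Y ω) - Jx (X ω) * Jy (Y ω) := by funext ω; ring
    rw [this]; exact hφXJyY.sub hJxJy
  have hsubprod2 : Integrable (fun ω => (ψ (Y ω) - Jy (Y ω)) * φ (X ω)) P := by
    have : (fun ω => (ψ (Y ω) - Jy (Y ω)) * φ (X ω))
        = fun ω => ψ (Y ω) * φ (X ω) - Jy (Y ω) * φ (X ω) := by funext ω; ring
    rw [this]; exact hψYφX.sub hJyYφX
  have hcd1 : |cov P (fun ω => φ (X ω) - Jx (X ω)) (fun ω => Jy (Y ω))| ≤ 2 * (M * (1/T)) := by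
    have h := abs_cov_le_two_mul (hφX.sub hJxX) hJyY hsubprod1
      (fun ω => hd0 _) (fun ω => hJy_abs _)
    have h2 : 2 * ∫ ω, (φ (X ω) - Jx (X ω)) ∂P ≤ 2 * (M * (1/T)) := by linarith
    exact h.trans h2
  have hcd2 : |cov P (fun ω => ψ (Y ω) - Jy (Y ω)) (fun ω => φ (X ω))| ≤ 2 * (M * (1/T)) := by
    have h := abs_cov_le_two_mul (hψY.sub hJyY) hφX hsubprod2
      (fun ω => he0 _) (fun ω => hφ_abs _)
    have h2 : 2 * ∫ ω, (ψ (Y ω) - Jy (Y ω)) ∂P ≤ 2 * (M * (1/T)) := by linarith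
    exact h.trans h2
  -- Step 4 : decomposition
  have E1 : cov P (fun ω => Jx (X ω)) (fun ω => Jy (Y ω))
      = cov P (fun ω => φ (X ω)) (fun ω => Jy (Y ω))
        - cov P (fun ω => φ (X ω) - Jx (X ω)) (fun ω => Jy (Y ω)) := by
    have hfe : (fun ω => Jx (X ω)) = fun ω => φ (X ω) - (φ (X ω) - Jx (X ω)) := by
      funext ω; ring
    rw [hfe]
    exact cov_sub_left hφX (hφX.sub hJxX) hφXJyY hsubprod1
  have E2 : cov P (fun ω => Jy (Y ω)) (fun ω => φ (X ω))
      = cov P (fun ω => ψ (Y ω)) (fun ω => φ (X ω))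
        - cov P (fun ω => ψ (Y ω) - Jy (Y ω)) (fun ω => φ (X ω)) := by
    have hfe : (fun ω => Jy (Y ω)) = fun ω => ψ (Y ω) - (ψ (Y ω) - Jy (Y ω)) := by
      funext ω; ring
    rw [hfe]
    exact cov_sub_left hψY (hψY.sub hJyY) hψYφX hsubprod2
  have E3 : cov P (fun ω => φ (X ω)) (fun ω => Jy (Y ω))
      = cov P (fun ω => Jy (Y ω)) (fun ω => φ (X ω)) := cov_comm _ _
  have E4 : cov P (fun ω => ψ (Y ω)) (fun ω => φ (X ω))
      = cov P (fun ω => φ (X ω)) (fun ω => ψ (Y ω)) := cov_comm _ _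
  -- Step 5 : combine
  have main : cov P (fun ω => Jx (X ω)) (fun ω => Jy (Y ω))
      ≤ T * (T * C) + 4 * (M * (1/T)) := by
    rw [E1, E3, E2, E4]
    have n1 := neg_abs_le (cov P (fun ω => φ (X ω) - Jx (X ω)) (fun ω => Jy (Y ω)))
    have n2 := neg_abs_le (cov P (fun ω => ψ (Y ω) - Jy (Y ω)) (fun ω => φ (X ω)))
    linarith
  -- Step 6 : numerics
  have hTTC : T * (T * C) = A ^ ((2:ℝ)/3) * C ^ ((1:ℝ)/3) := by
    rw [hT, ← mul_assoc]; exact rpow_fact1 hApos hCpos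
  have h4M : 4 * (M * (1/T)) = 2 * (A ^ ((2:ℝ)/3) * C ^ ((1:ℝ)/3)) := by
    have h := rpow_fact2 hApos hCpos
    rw [← hT] at h
    linear_combination 2 * h - (2 * (1/T)) * hA
  have hAK : A ^ ((2:ℝ)/3) = 2 ^ ((2:ℝ)/3) * M ^ ((2:ℝ)/3) := by
    rw [hA, Real.mul_rpow (by norm_num) hM0]
  have hkey := key_numeric hMpos
  have hC13 : (0:ℝ) < C ^ ((1:ℝ)/3) := Real.rpow_pos_of_pos hCpos _
  calc cov P (fun ω => Jx (X ω)) (fun ω => Jy (Y ω))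
      ≤ T * (T * C) + 4 * (M * (1/T)) := main
  _ = 3 * (A ^ ((2:ℝ)/3) * C ^ ((1:ℝ)/3)) := by rw [hTTC, h4M]; ring
  _ = 3 * ((2 ^ ((2:ℝ)/3) * M ^ ((2:ℝ)/3)) * C ^ ((1:ℝ)/3)) := by rw [hAK]
  _ ≤ 3 * ((2 ^ (-(2:ℝ)/3) * max (2 / Real.pi ^ 2) (45 * M)) * C ^ ((1:ℝ)/3)) := by
      nlinarith [hkey, hC13]
  _ = 3 * (2 : ℝ) ^ (-(2 : ℝ) / 3) * max (2 / Real.pi ^ 2) (45 * M) * C ^ ((1:ℝ)/3) := by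
      ring
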